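/- Define QBER(p) = 49p²/3 − 56p³ + 2380p⁴/27 − 6160p⁵/81 + 8512p⁶/243 − 4824p⁷/729 for p ∈ [0,1]. Then QBER(0.08) < 0.08 and QBER(0.085) > 0.085; consequently, by continuity, there exists p_th ∈ (0.08, 0.085) with QBER(p_th) = p_th. (Existence of the probability threshold p_th ≈ 0.081 of the proposed single-logical-qubit error-correction scheme using six noisy EPR pairs.) -/
import Mathlib


/-- The qubit error ratio of the proposed single-logical-qubit error-correction scheme
using six noisy EPR pairs over quantum depolarizing channels with depolarizing
probability `p`. -/
noncomputable def QBER (p : ℝ) : ℝ :=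
  49*p^2/3 - 56*p^3 + 2380*p^4/27 - 6160*p^5/81 + 8512*p^6/243 - 4824*p^7/729

lemma qber_cont : Continuous fun p : ℝ => QBER p - p := by
  unfold QBER; continuity

/-- `QBER(0.08) < 0.08` and `QBER(0.085) > 0.085`; consequently, by continuity, there is
a probability threshold `p_th ∈ (0.08, 0.085)` with `QBER(p_th) = p_th`. -/
theorem stmt16 :
    QBER 0.08 < 0.08 ∧ QBER 0.085 > 0.085 ∧
    ∃ pth ∈ Set.Ioo (0.08 : ℝ) 0.085, QBER pth = pth := by
  have h1 : QBER 0.08 < 0.08 := by unfold QBER; norm_num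
  have h2 : QBER 0.085 > 0.085 := by unfold QBER; norm_num
  refine ⟨h1, h2, ?_⟩
  have hle : (0.08 : ℝ) ≤ 0.085 := by norm_num
  have := intermediate_value_Ioo hle (qber_cont.continuousOn)
  have hmem : (0 : ℝ) ∈ Set.Ioo (QBER 0.08 - 0.08) (QBER 0.085 - 0.085) :=
    ⟨by linarith, by linarith⟩
  obtain ⟨p, hp, hval⟩ := this hmem
  exact ⟨p, hp, by simpa [sub_eq_zero] using hval⟩
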